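/- For every connected graph G of order n ≥ 2 that is not a complete graph, eqdim(G) ≤ n − ω(G), where ω(G) is the clique number of G. -/
import Mathlib


/-- `S` is a distance-equalizer set of `G`. -/
def IsDistEqSet {V : Type*} (G : SimpleGraph V) (S : Set V) : Prop :=
  ∀ u v : V, u ∉ S → v ∉ S → u ≠ v → ∃ x ∈ S, G.dist u x = G.dist v x

/-- The equidistant dimension of `G`. -/
noncomputable def eqdim {V : Type*} (G : SimpleGraph V) : ℕ :=
  sInf {k | ∃ S : Finset V, IsDistEqSet G ↑S ∧ S.card = k}

private lemma walk_cross {V : Type*} (G : SimpleGraph V) (W : Set V) :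
    ∀ {a b : V}, G.Walk a b → a ∈ W → b ∉ W →
    ∃ u x, u ∈ W ∧ x ∉ W ∧ G.Adj u x := by
  intro a b p
  induction p with
  | nil => intro ha hb; exact absurd ha hb
  | @cons x y z h p ih =>
    intro ha hb
    by_cases hc : y ∈ W
    · exact ih hc hb
    · exact ⟨x, y, ha, hc, h⟩

theorem stmt5 {V : Type*} [Fintype V] (G : SimpleGraph V)
    (hconn : G.Connected) (hn : 2 ≤ Fintype.card V) (hG : G ≠ ⊤) :
    eqdim G ≤ Fintype.card V - G.cliqueNum := by
  classical
  obtain ⟨W, hW⟩ := G.exists_isNClique_cliqueNum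
  -- W is not all of V
  have hWne : (W : Set V) ≠ Set.univ := by
    intro h
    apply hG
    ext x y
    simp only [SimpleGraph.top_adj]
    constructor
    · exact fun h' => h'.ne
    · intro hxy
      exact hW.isClique (by simp [h]) (by simp [h]) hxy
  -- W is nonempty
  have hWnonempty : W.Nonempty := by
    rcases Finset.eq_empty_or_nonempty W with h | h
    · exfalso
      obtain ⟨x, y, hxy⟩ := Fintype.exists_pair_of_one_lt_card hn
      have h1 : ({x} : Finset V).card ≤ G.cliqueNum :=
        SimpleGraph.IsClique.card_le_cliqueNum (tc := by simp)
      simp only [Finset.card_singleton] at h1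
      have h2 := hW.card_eq
      have h3 : W.card = 0 := by simp [h]
      omega
    · exact h
  obtain ⟨b, hb⟩ : ∃ b, b ∉ W := by
    by_contra h
    push_neg at h
    exact hWne (Set.eq_univ_iff_forall.mpr (by exact_mod_cast h))
  obtain ⟨w0, hw0⟩ := hWnonempty
  obtain ⟨u, a, hu, ha, hadj⟩ :=
    walk_cross G (W : Set V) ((hconn.preconnected w0 b).some) (by exact_mod_cast hw0)
      (by exact_mod_cast hb)
  have haW : a ∉ W := by exact_mod_cast ha
  have huW : u ∈ W := by exact_mod_cast hu
  -- the set T of vertices not in S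
  set T : Finset V := insert a (W.erase u) with hT
  have huT : u ∉ T := by
    simp only [hT, Finset.mem_insert, Finset.mem_erase]
    rintro (rfl | ⟨h, -⟩)
    · exact haW huW
    · exact h rfl
  -- all vertices of T are adjacent to u
  have hadjT : ∀ x ∈ T, G.Adj x u := by
    intro x hx
    simp only [hT, Finset.mem_insert, Finset.mem_erase] at hx
    rcases hx with rfl | ⟨hne, hxW⟩
    · exact hadj.symm
    · exact hW.isClique hxW huW hne
  set S : Finset V := Finset.univ \ T with hS
  have hDES : IsDistEqSet G ↑S := by
    intro x y hx hy hxy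
    have hxT : x ∈ T := by
      by_contra h
      exact hx (by simp [hS, h])
    have hyT : y ∈ T := by
      by_contra h
      exact hy (by simp [hS, h])
    refine ⟨u, by simp [hS, huT], ?_⟩
    rw [SimpleGraph.dist_eq_one_iff_adj.mpr (hadjT x hxT),
      SimpleGraph.dist_eq_one_iff_adj.mpr (hadjT y hyT)]
  have hcardT : T.card = G.cliqueNum := by
    rw [hT, Finset.card_insert_of_notMem (by simp [haW]),
      Finset.card_erase_of_mem huW, hW.card_eq]
    have h1 : 1 ≤ G.cliqueNum := by
      rw [← hW.card_eq]; exact Finset.card_pos.mpr ⟨w0, hw0⟩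
    omega
  have hcardS : S.card = Fintype.card V - G.cliqueNum := by
    rw [hS, Finset.card_sdiff_of_subset (Finset.subset_univ T), Finset.card_univ, hcardT]
  exact Nat.sInf_le ⟨S, hDES, hcardS⟩
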